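/- (MacWilliams Identity) Let C ⊆ F_2^n be a binary code with weight enumerator W_C(X) = ∑_{v∈C} X^{|v|}. Then #C · W_{C^⊥}(X) = ∑_{v∈C} (1-X)^{|v|} (1+X)^{n-|v|} in ℤ[X]. -/
import Mathlib

open Finset Polynomial

noncomputable section

abbrev Fv (n : ℕ) := Fin n → ZMod 2

lemma zmod2_cases (x : ZMod 2) : x = 0 ∨ x = 1 := by revert x; decide

/-- sign character ZMod 2 → ℤ[X] -/
def χ (x : ZMod 2) : Polynomial ℤ := if x = 0 then 1 else -1

lemma χ_add (a b : ZMod 2) : χ (a + b) = χ a * χ b := by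
  rcases zmod2_cases a with ha | ha <;> rcases zmod2_cases b with hb | hb <;>
    simp [ha, hb, χ, show (1 + 1 : ZMod 2) = 0 from rfl]

lemma χ_zero : χ 0 = 1 := rfl

lemma χ_sum {ι : Type*} (s : Finset ι) (f : ι → ZMod 2) :
    χ (∑ i ∈ s, f i) = ∏ i ∈ s, χ (f i) := by
  induction s using Finset.cons_induction with
  | empty => simp [χ_zero]
  | cons a s ha ih => simp [Finset.sum_cons, Finset.prod_cons, χ_add, ih]

lemma hammingNorm_eq_sum_val {n : ℕ} (w : Fv n) :
    hammingNorm w = ∑ i, (w i).val := by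
  unfold hammingNorm
  rw [Finset.card_filter]
  refine Finset.sum_congr rfl fun i _ => ?_
  rcases zmod2_cases (w i) with h | h <;> rw [h] <;> rfl

lemma key_expand {n : ℕ} (v : Fv n) :
    (1 - X : Polynomial ℤ) ^ (hammingNorm v) * (1 + X) ^ (n - hammingNorm v)
      = ∑ w : Fv n, χ (∑ i, v i * w i) * X ^ (hammingNorm w) := by
  classical
  have step1 : (1 - X : Polynomial ℤ) ^ (hammingNorm v) * (1 + X) ^ (n - hammingNorm v)
      = ∏ i, (if v i = 0 then (1 + X : Polynomial ℤ) else (1 - X)) := by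
    rw [Finset.prod_ite]
    simp only [Finset.prod_const]
    have hcard : #({i | ¬ v i = 0} : Finset (Fin n)) = hammingNorm v := rfl
    have hcard2 : #({i | v i = 0} : Finset (Fin n)) = n - hammingNorm v := by
      have h1 := Finset.card_filter_add_card_filter_not
        (s := (Finset.univ : Finset (Fin n))) (p := fun i => v i = 0)
      have h2 : #(Finset.univ : Finset (Fin n)) = n := by simp
      have h3 := Finset.card_filter_le (Finset.univ : Finset (Fin n)) (fun i => ¬ v i = 0)
      rw [h2] at h1 h3
      rw [← hcard]
      omega
    rw [hcard, hcard2, mul_comm]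
  have step2 : ∀ i : Fin n, (if v i = 0 then (1 + X : Polynomial ℤ) else (1 - X))
      = ∑ b : ZMod 2, χ (v i * b) * X ^ b.val := by
    intro i
    have hsum : (Finset.univ : Finset (ZMod 2)) = {0, 1} := by decide
    rcases zmod2_cases (v i) with h | h <;>
      simp [h, hsum, χ, sub_eq_add_neg, show ((1 : ZMod 2).val) = 1 from rfl]
  rw [step1]
  simp only [step2]
  rw [Finset.prod_univ_sum]
  rw [show Fintype.piFinset (fun _ : Fin n => (Finset.univ : Finset (ZMod 2))) = Finset.univ
    from Fintype.piFinset_univ]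
  refine Finset.sum_congr rfl fun w _ => ?_
  rw [Finset.prod_mul_distrib, ← χ_sum, Finset.prod_pow_eq_pow_sum, hammingNorm_eq_sum_val]

end

/-- The dual code of a binary code `C ⊆ F_2^n`. -/
def dualCode (n : ℕ) (C : Submodule (ZMod 2) (Fin n → ZMod 2)) :
    Submodule (ZMod 2) (Fin n → ZMod 2) where
  carrier := {v | ∀ w ∈ C, ∑ i, v i * w i = 0}
  add_mem' := by
    intro a b ha hb w hw
    simp only [Pi.add_apply, add_mul]
    rw [Finset.sum_add_distrib, ha w hw, hb w hw, add_zero]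
  zero_mem' := by intro w hw; simp
  smul_mem' := by
    intro c a ha w hw
    simp only [Pi.smul_apply, smul_eq_mul, mul_assoc, ← Finset.mul_sum, ha w hw, mul_zero]


open Polynomial in
/-- MacWilliams Identity:
`#C · W_{C^⊥}(X) = ∑_{v∈C} (1-X)^{|v|} (1+X)^{n-|v|}` in `ℤ[X]`. -/
theorem stmt_3 (n : ℕ) (C : Submodule (ZMod 2) (Fin n → ZMod 2)) :
    (Nat.card C : Polynomial ℤ) *
        ∑ᶠ w ∈ ((dualCode n C : Submodule (ZMod 2) (Fin n → ZMod 2)) :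
          Set (Fin n → ZMod 2)), (X : Polynomial ℤ) ^ (hammingNorm w)
      = ∑ᶠ v ∈ (C : Set (Fin n → ZMod 2)),
          (1 - X : Polynomial ℤ) ^ (hammingNorm v) * (1 + X) ^ (n - hammingNorm v) := by
  classical
  set D := dualCode n C with hD
  have hCfin : ((C : Set (Fv n))).Finite := Set.toFinite _
  have hDfin : ((D : Set (Fv n))).Finite := Set.toFinite _
  set Cf : Finset (Fv n) := hCfin.toFinset with hCf
  set Df : Finset (Fv n) := hDfin.toFinset with hDf
  have hmemC : ∀ v, v ∈ Cf ↔ v ∈ C := fun v => by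
    rw [hCf, Set.Finite.mem_toFinset, SetLike.mem_coe]
  have hmemD : ∀ v, v ∈ Df ↔ v ∈ D := fun v => by
    rw [hDf, Set.Finite.mem_toFinset, SetLike.mem_coe]
  -- rewrite finsums as finset sums
  rw [← hCfin.coe_toFinset, ← hDfin.coe_toFinset, finsum_mem_coe_finset,
    finsum_mem_coe_finset]
  -- Nat.card C = Cf.card
  have hcard : (Nat.card C : Polynomial ℤ) = (Cf.card : Polynomial ℤ) := by
    congr 1
    calc Nat.card C = Nat.card ↥(C : Set (Fv n)) := rfl
      _ = (C : Set (Fv n)).ncard := Nat.card_coe_set_eq _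
      _ = Cf.card := Set.ncard_eq_toFinset_card _ hCfin
  -- character sum lemma
  have hcomm : ∀ (a b : Fv n), (∑ i, a i * b i : ZMod 2) = ∑ i, b i * a i :=
    fun a b => Finset.sum_congr rfl fun i _ => mul_comm _ _
  have char_sum : ∀ w : Fv n, (∑ v ∈ Cf, χ (∑ i, v i * w i))
      = if w ∈ Df then (Cf.card : Polynomial ℤ) else 0 := by
    intro w
    by_cases hw : w ∈ Df
    · have hw' : ∀ v ∈ Cf, (∑ i, v i * w i : ZMod 2) = 0 := by
        intro v hv
        have h2 := ((hmemD w).mp hw) v ((hmemC v).mp hv)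
        exact (hcomm v w).trans h2
      rw [if_pos hw]
      calc (∑ v ∈ Cf, χ (∑ i, v i * w i)) = ∑ _v ∈ Cf, (1 : Polynomial ℤ) :=
            Finset.sum_congr rfl (fun v hv => by rw [hw' v hv]; rfl)
        _ = (Cf.card : Polynomial ℤ) := by simp
    · have hex : ∃ v0 ∈ Cf, (∑ i, v0 i * w i : ZMod 2) = 1 := by
        by_contra hcon
        push_neg at hcon
        apply hw
        rw [hmemD]
        intro v hv
        have h1 := hcon v ((hmemC v).mpr hv)
        rcases zmod2_cases (∑ i, w i * v i : ZMod 2) with h | h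
        · exact h
        · exact absurd (by rw [hcomm w v] at h; exact h) h1
      obtain ⟨v0, hv0, hv0w⟩ := hex
      set S : Polynomial ℤ := ∑ v ∈ Cf, χ (∑ i, v i * w i) with hS
      have hneg : S = -S := by
        have hbij : (∑ v ∈ Cf, χ (∑ i, (v + v0) i * w i)) = S := by
          rw [hS]
          apply Finset.sum_nbij' (i := fun v => v + v0) (j := fun v => v + v0)
          · intro a ha
            rw [hmemC]; exact C.add_mem ((hmemC a).mp ha) ((hmemC v0).mp hv0)
          · intro a ha
            rw [hmemC]; exact C.add_mem ((hmemC a).mp ha) ((hmemC v0).mp hv0)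
          · intro a _
            funext i
            simp only [Pi.add_apply, add_assoc]
            have h0 : v0 i + v0 i = 0 := by rcases zmod2_cases (v0 i) with h | h <;> rw [h] <;> rfl
            rw [h0, add_zero]
          · intro a _
            funext i
            simp only [Pi.add_apply, add_assoc]
            have h0 : v0 i + v0 i = 0 := by rcases zmod2_cases (v0 i) with h | h <;> rw [h] <;> rfl
            rw [h0, add_zero]
          · intro a _; rfl
        calc S = ∑ v ∈ Cf, χ (∑ i, (v + v0) i * w i) := hbij.symm
        _ = ∑ v ∈ Cf, - χ (∑ i, v i * w i) := by
            refine Finset.sum_congr rfl fun v _ => ?_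
            have hsplit : (∑ i, (v + v0) i * w i : ZMod 2)
                = (∑ i, v i * w i) + (∑ i, v0 i * w i) := by
              simp [Pi.add_apply, add_mul, Finset.sum_add_distrib]
            rw [hsplit, χ_add, hv0w]
            simp [χ]
        _ = -S := by rw [hS, ← Finset.sum_neg_distrib]
      have h2S : (2 : Polynomial ℤ) * S = 0 := by linear_combination hneg
      rw [if_neg hw]
      have h2 : (2 : Polynomial ℤ) ≠ 0 := by
        intro h
        have := congrArg (fun p => Polynomial.coeff p 0) h
        simp at this
      exact (mul_eq_zero.mp h2S).resolve_left h2
  -- main computation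
  calc (Nat.card C : Polynomial ℤ) * ∑ w ∈ Df, (X : Polynomial ℤ) ^ hammingNorm w
      = ∑ w ∈ Df, (Cf.card : Polynomial ℤ) * X ^ hammingNorm w := by
        rw [hcard, Finset.mul_sum]
    _ = ∑ w : Fv n, (if w ∈ Df then (Cf.card : Polynomial ℤ) else 0) * X ^ hammingNorm w := by
        rw [eq_comm]
        simp only [ite_mul, zero_mul]
        rw [Finset.sum_ite_mem, Finset.univ_inter]
    _ = ∑ w : Fv n, (∑ v ∈ Cf, χ (∑ i, v i * w i)) * X ^ hammingNorm w := by
        refine Finset.sum_congr rfl fun w _ => by rw [char_sum]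
    _ = ∑ v ∈ Cf, ∑ w : Fv n, χ (∑ i, v i * w i) * X ^ hammingNorm w := by
        simp only [Finset.sum_mul]
        rw [Finset.sum_comm]
    _ = ∑ v ∈ Cf, (1 - X : Polynomial ℤ) ^ hammingNorm v * (1 + X) ^ (n - hammingNorm v) := by
        refine Finset.sum_congr rfl fun v _ => (key_expand v).symm
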